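/- Let f₂ be the unique entire function with f₂(0) = 0 and f₂'(z) = 2·exp(−z²), let f₋₂ be the unique entire function with f₋₂(0) = 0 and f₋₂'(z) = −2·exp(−z²), and let x₀ > 0 be the unique positive real fixed point of f₂. Then f₋₂(x₀) = −x₀, f₋₂(−x₀) = x₀, f₋₂(x₀) ≠ x₀, and |(f₋₂ ∘ f₋₂)'(x₀)| < 1; i.e., x₀ is an attracting periodic point of f₋₂ of period 2. -/

import Mathlib

open Complex intervalIntegral

noncomputable def Uaux : ℝ → ℝ := fun x => ∫ t in (0:ℝ)..x, 2 * Real.exp (-t^2)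

lemma Uauxcont' : Continuous (fun t : ℝ => 2 * Real.exp (-t^2)) := by continuity

lemma Uaux_hasDerivAt (x : ℝ) : HasDerivAt Uaux (2 * Real.exp (-x^2)) x := by
  exact intervalIntegral.integral_hasDerivAt_right
    ((Uauxcont'.intervalIntegrable 0 x))
    (Uauxcont'.stronglyMeasurableAtFilter _ _)
    Uauxcont'.continuousAt

lemma Uaux_continuous : Continuous Uaux :=
  continuous_iff_continuousAt.mpr fun x => (Uaux_hasDerivAt x).continuousAt

lemma f_eq_Uaux (f : ℂ → ℂ) (hf : Differentiable ℂ f) (hf0 : f 0 = 0)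
    (hf' : ∀ z : ℂ, deriv f z = 2 * Complex.exp (-z ^ 2)) (x : ℝ) :
    f (x : ℂ) = (Uaux x : ℂ) := by
  have hdiff : Differentiable ℝ (fun s : ℝ => f (s : ℂ) - (Uaux s : ℂ)) :=
    fun t => ((hf _).hasDerivAt.comp_ofReal.sub
      ((Uaux_hasDerivAt t).ofReal_comp)).differentiableAt
  have hderiv : ∀ t : ℝ, deriv (fun s : ℝ => f (s : ℂ) - (Uaux s : ℂ)) t = 0 := by
    intro t
    have h : HasDerivAt (fun s : ℝ => f (s : ℂ) - (Uaux s : ℂ))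
        (deriv f t - ((2 * Real.exp (-t^2) : ℝ) : ℂ)) t :=
      (hf _).hasDerivAt.comp_ofReal.sub ((Uaux_hasDerivAt t).ofReal_comp)
    rw [h.deriv, hf']
    push_cast [Complex.ofReal_exp]
    ring
  have key := is_const_of_deriv_eq_zero hdiff hderiv x 0
  have h0 : Uaux 0 = 0 := by simp [Uaux]
  simp only [h0, Complex.ofReal_zero, hf0, sub_zero, sub_eq_sub_iff_sub_eq_sub] at key
  simpa [sub_eq_zero] using key

lemma g_eq_neg_f (f g : ℂ → ℂ)
    (hf : Differentiable ℂ f) (hf0 : f 0 = 0)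
    (hf' : ∀ z : ℂ, deriv f z = 2 * Complex.exp (-z ^ 2))
    (hg : Differentiable ℂ g) (hg0 : g 0 = 0)
    (hg' : ∀ z : ℂ, deriv g z = -2 * Complex.exp (-z ^ 2)) (z : ℂ) :
    g z = -(f z) := by
  have hdiff : Differentiable ℂ (fun w => g w + f w) := hg.add hf
  have hderiv : ∀ w : ℂ, deriv (fun w => g w + f w) w = 0 := by
    intro w
    rw [deriv_fun_add (hg w) (hf w), hf', hg']; ring
  have := is_const_of_deriv_eq_zero hdiff hderiv z 0
  simp only [hf0, hg0, add_zero] at this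
  linear_combination this

lemma f_odd (f : ℂ → ℂ)
    (hf : Differentiable ℂ f) (hf0 : f 0 = 0)
    (hf' : ∀ z : ℂ, deriv f z = 2 * Complex.exp (-z ^ 2)) (z : ℂ) :
    f (-z) = -(f z) := by
  have hdiff : Differentiable ℂ (fun w => f w + f (-w)) :=
    hf.add (hf.comp (differentiable_neg))
  have hderiv : ∀ w : ℂ, deriv (fun w => f w + f (-w)) w = 0 := by
    intro w
    have h1 : HasDerivAt (fun w : ℂ => f (-w)) (deriv f (-w) * (-1)) w :=
      (hf (-w)).hasDerivAt.comp w (hasDerivAt_neg w)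
    have h : HasDerivAt (fun w => f w + f (-w)) (deriv f w + deriv f (-w) * (-1)) w :=
      (hf w).hasDerivAt.add h1
    rw [h.deriv, hf', hf']
    ring_nf
  have := is_const_of_deriv_eq_zero hdiff hderiv z 0
  simp only [hf0, neg_zero, add_zero] at this
  linear_combination this

lemma Uaux_lower : (156/125 : ℝ) ≤ Uaux (6/5) := by
  have h1 : ∫ t in (0:ℝ)..(6/5), (2 - 2*t^2) ≤ ∫ t in (0:ℝ)..(6/5), 2 * Real.exp (-t^2) := by
    apply intervalIntegral.integral_mono_on (by norm_num)
    · exact (Continuous.intervalIntegrable (by continuity) _ _)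
    · exact Uauxcont'.intervalIntegrable _ _
    · intro t ht
      have := Real.add_one_le_exp (-t^2)
      nlinarith
  have h2 : ∫ t in (0:ℝ)..(6/5), (2 - 2*t^2) = 156/125 := by
    rw [intervalIntegral.integral_sub intervalIntegrable_const
      ((Continuous.intervalIntegrable (by continuity) _ _))]
    simp only [intervalIntegral.integral_const_mul, integral_pow]
    norm_num
  rw [Uaux]; linarith

lemma Uaux_upper : Uaux 4 < 4 := by
  have hsplit : Uaux 4 = (∫ t in (0:ℝ)..1, 2 * Real.exp (-t^2))
      + ∫ t in (1:ℝ)..4, 2 * Real.exp (-t^2) := by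
    rw [Uaux, ← intervalIntegral.integral_add_adjacent_intervals
      (Uauxcont'.intervalIntegrable 0 1) (Uauxcont'.intervalIntegrable 1 4)]
  have h1 : ∫ t in (0:ℝ)..1, 2 * Real.exp (-t^2) ≤ ∫ t in (0:ℝ)..1, 2 * (1/(1+t^2)) := by
    apply intervalIntegral.integral_mono_on (by norm_num)
    · exact Uauxcont'.intervalIntegrable _ _
    · exact (Continuous.intervalIntegrable (by
        apply Continuous.mul continuous_const
        apply Continuous.div continuous_const (by continuity)
        intro t; positivity) _ _)
    · intro t ht
      have h := Real.add_one_le_exp (t^2)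
      have hpos : (0:ℝ) < 1 + t^2 := by positivity
      have hexp : Real.exp (-t^2) = 1 / Real.exp (t^2) := by
        rw [Real.exp_neg]; ring
      rw [hexp]
      have : 1 / Real.exp (t^2) ≤ 1 / (1+t^2) := by
        apply one_div_le_one_div_of_le hpos; linarith
      linarith
  have h1' : ∫ t in (0:ℝ)..1, 2 * (1/(1+t^2)) = Real.pi / 2 := by
    rw [intervalIntegral.integral_const_mul]
    simp only [integral_one_div_one_add_sq]
    rw [Real.arctan_one, Real.arctan_zero]
    ring
  have h2 : ∫ t in (1:ℝ)..4, 2 * Real.exp (-t^2) ≤ ∫ t in (1:ℝ)..4, 2 * Real.exp (-1) := by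
    apply intervalIntegral.integral_mono_on (by norm_num)
    · exact Uauxcont'.intervalIntegrable _ _
    · exact intervalIntegrable_const
    · intro t ht
      have h1t : 1 ≤ t := ht.1
      have : -t^2 ≤ -1 := by nlinarith
      have := Real.exp_le_exp.mpr this
      linarith
  have h2' : ∫ t in (1:ℝ)..4, (2 * Real.exp (-1) : ℝ) = 6 * Real.exp (-1) := by
    rw [intervalIntegral.integral_const]
    simp
    ring
  have hpi : Real.pi < 3.15 := Real.pi_lt_d2
  have he : (2.7182818283 : ℝ) < Real.exp 1 := Real.exp_one_gt_d9
  have hexpneg : Real.exp (-1) < 1/2.7182818283 := by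
    rw [Real.exp_neg, inv_eq_one_div]
    apply one_div_lt_one_div_of_lt (by norm_num) he
  rw [hsplit]
  have : Real.pi / 2 + 6 * Real.exp (-1) < 4 := by
    nlinarith
  linarith

theorem stmt12 (f g : ℂ → ℂ)
    (hf : Differentiable ℂ f) (hf0 : f 0 = 0)
    (hf' : ∀ z : ℂ, deriv f z = 2 * Complex.exp (-z ^ 2))
    (hg : Differentiable ℂ g) (hg0 : g 0 = 0)
    (hg' : ∀ z : ℂ, deriv g z = -2 * Complex.exp (-z ^ 2))
    (x₀ : ℝ) (hx₀ : 0 < x₀) (hfix : f (x₀ : ℂ) = (x₀ : ℂ))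
    (huniq : ∀ y : ℝ, 0 < y → f (y : ℂ) = (y : ℂ) → y = x₀) :
    g (x₀ : ℂ) = -(x₀ : ℂ) ∧ g (-(x₀ : ℂ)) = (x₀ : ℂ) ∧
    g (x₀ : ℂ) ≠ (x₀ : ℂ) ∧ ‖deriv (g ∘ g) (x₀ : ℂ)‖ < 1 := by
  have hgf : ∀ z, g z = -(f z) := g_eq_neg_f f g hf hf0 hf' hg hg0 hg'
  have hodd : ∀ z, f (-z) = -(f z) := f_odd f hf hf0 hf'
  have hG1 : g (x₀ : ℂ) = -(x₀ : ℂ) := by rw [hgf, hfix]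
  have hG2 : g (-(x₀ : ℂ)) = (x₀ : ℂ) := by rw [hgf, hodd, hfix, neg_neg]
  have hx0ne : (x₀ : ℂ) ≠ 0 := by
    simpa using (ne_of_gt hx₀)
  have hG3 : g (x₀ : ℂ) ≠ (x₀ : ℂ) := by
    rw [hG1]
    intro h
    have : (x₀ : ℂ) = 0 := by linear_combination -h / 2
    exact hx0ne this
  -- lower bound on x₀ via IVT
  have hfU := f_eq_Uaux f hf hf0 hf'
  have hx₀lb : (6/5 : ℝ) ≤ x₀ := by
    by_contra hlt
    push_neg at hlt
    set G : ℝ → ℝ := fun x => Uaux x - x with hGdef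
    have hGcont : ContinuousOn G (Set.Icc (6/5 : ℝ) 4) :=
      (Uaux_continuous.sub continuous_id).continuousOn
    have hG65 : 0 ≤ G (6/5) := by
      have := Uaux_lower
      simp only [hGdef]
      linarith
    have hG4 : G 4 ≤ 0 := by
      have := Uaux_upper
      simp only [hGdef]
      linarith
    have hmem : (0:ℝ) ∈ Set.Icc (G 4) (G (6/5)) := ⟨hG4, hG65⟩
    obtain ⟨y, hy, hGy⟩ := intermediate_value_Icc' (by norm_num : (6/5:ℝ) ≤ 4) hGcont hmem
    have hUy : Uaux y = y := by
      have : Uaux y - y = 0 := hGy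
      linarith
    have hyfix : f (y : ℂ) = (y : ℂ) := by rw [hfU y, hUy]
    have hypos : 0 < y := lt_of_lt_of_le (by norm_num) hy.1
    have := huniq y hypos hyfix
    subst this
    exact absurd hy.1 (not_le.mpr hlt)
  -- derivative of g ∘ g at x₀
  have hderivcomp : deriv (g ∘ g) (x₀ : ℂ) = deriv g (g (x₀ : ℂ)) * deriv g (x₀ : ℂ) :=
    deriv_comp _ (hg _) (hg _)
  have hval : deriv (g ∘ g) (x₀ : ℂ) =
      (-2 * Complex.exp (-(x₀:ℂ)^2)) * (-2 * Complex.exp (-(x₀:ℂ)^2)) := by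
    rw [hderivcomp, hG1, hg', hg']
    ring_nf
  have habs : ‖deriv (g ∘ g) (x₀ : ℂ)‖ =
      4 * Real.exp (-(x₀^2)) * Real.exp (-(x₀^2)) := by
    rw [hval]
    have hcast : (-(x₀:ℂ)^2) = ((-(x₀^2) : ℝ) : ℂ) := by push_cast; ring
    rw [hcast]
    simp only [norm_mul, Complex.norm_exp_ofReal]
    have h2 : ‖(-2:ℂ)‖ = 2 := by simp
    rw [h2]; ring
  have hfinal : 4 * Real.exp (-(x₀^2)) * Real.exp (-(x₀^2)) < 1 := by
    have hx2 : (2:ℝ) ≤ x₀^2 + x₀^2 := by nlinarith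
    have h4 : (4:ℝ) < Real.exp (x₀^2 + x₀^2) := by
      have he : (2.7182818283 : ℝ) < Real.exp 1 := Real.exp_one_gt_d9
      have h2 : Real.exp 2 ≤ Real.exp (x₀^2 + x₀^2) := Real.exp_le_exp.mpr hx2
      have : Real.exp 2 = Real.exp 1 * Real.exp 1 := by
        rw [← Real.exp_add]; norm_num
      nlinarith
    have hpos : 0 < Real.exp (x₀^2 + x₀^2) := Real.exp_pos _
    have hmul : Real.exp (-(x₀^2)) * Real.exp (-(x₀^2)) = (Real.exp (x₀^2 + x₀^2))⁻¹ := by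
      rw [← Real.exp_add, ← Real.exp_neg]
      ring_nf
    rw [mul_assoc, hmul, ← div_eq_mul_inv, div_lt_one hpos]
    linarith
  exact ⟨hG1, hG2, hG3, by rw [habs]; exact hfinal⟩
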